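/- Let D and V be normed spaces with D continuously embedded in V with ‖v‖_V ≤ ‖v‖_D for all v ∈ D. Suppose D = W̃ ⊕ Z (direct sum of subspaces), let Z̃: D → ℝ^S be linear, let C_P := sup_{h ∉ ker Z̃} ‖P_{W̃}^{Z} h‖_D / ‖Z̃ h‖ < ∞, and let β := inf_{Θ ∈ Z, Θ≠0} ‖Θ‖_D² / ‖Θ‖_V². If β ≥ 4ξ and λ ≥ C_P²(2ξ+1) for some ξ > 0, then for every z ∈ D: ‖z‖_D² + λ‖Z̃ z‖² ≥ ξ‖z‖_V². -/
import Mathlib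


/-- Key coercivity inequality: if `β ≥ 4ξ` and `λ ≥ C_P²(2ξ+1)` then
`‖z‖_D² + λ‖Z̃ z‖² ≥ ξ‖z‖_V²` for all `z ∈ D`. -/
theorem stmt8 {D V : Type*} [NormedAddCommGroup D] [NormedSpace ℝ D]
    [NormedAddCommGroup V] [NormedSpace ℝ V]
    (ι : D →L[ℝ] V) (hι : ∀ v, ‖ι v‖ ≤ ‖v‖)
    (Wt Z : Submodule ℝ D) (hc : IsCompl Wt Z)
    (S : ℕ) (Zt : D →ₗ[ℝ] EuclideanSpace ℝ (Fin S))
    (hker : ∀ z ∈ Z, Zt z = 0)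
    (CP β ξ lam : ℝ)
    (hCP : ∀ h : D, ‖((Wt.linearProjOfIsCompl Z hc) h : D)‖ ≤ CP * ‖Zt h‖)
    (hβ : ∀ Θ ∈ Z, β * ‖ι Θ‖ ^ 2 ≤ ‖Θ‖ ^ 2)
    (hξ : 0 < ξ) (hβξ : 4 * ξ ≤ β) (hlam : CP ^ 2 * (2 * ξ + 1) ≤ lam) :
    ∀ z : D, ξ * ‖ι z‖ ^ 2 ≤ ‖z‖ ^ 2 + lam * ‖Zt z‖ ^ 2 := by
  intro z
  set ϑ : D := (Wt.linearProjOfIsCompl Z hc z : D) with hϑdef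
  have hsum := Submodule.projection_add_projection_eq_self hc z
  have hΘmem : z - ϑ ∈ Z := by
    have : z - ϑ = (Z.linearProjOfIsCompl Wt hc.symm z : D) := by
      rw [hϑdef]; exact sub_eq_of_eq_add' hsum.symm
    rw [this]; exact Subtype.coe_prop _
  have h1 : β * ‖ι (z - ϑ)‖ ^ 2 ≤ ‖z - ϑ‖ ^ 2 := hβ _ hΘmem
  have h2 : ‖ϑ‖ ≤ CP * ‖Zt z‖ := hCP z
  have hA : ‖ι z‖ ≤ ‖ι (z - ϑ)‖ + ‖ι ϑ‖ := by
    have h : z - ϑ + ϑ = z := sub_add_cancel z ϑ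
    calc ‖ι z‖ = ‖ι (z - ϑ) + ι ϑ‖ := by rw [← map_add, h]
    _ ≤ _ := norm_add_le _ _
  have hB : ‖ι ϑ‖ ≤ ‖ϑ‖ := hι ϑ
  have hC : ‖z - ϑ‖ ≤ ‖z‖ + ‖ϑ‖ := norm_sub_le _ _
  clear_value ϑ
  clear hsum hϑdef hΘmem hCP hβ hker
  have n1 : (0:ℝ) ≤ ‖ι z‖ := norm_nonneg _
  have n2 : (0:ℝ) ≤ ‖ι (z - ϑ)‖ := norm_nonneg _
  have n3 : (0:ℝ) ≤ ‖ι ϑ‖ := norm_nonneg _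
  have n4 : (0:ℝ) ≤ ‖ϑ‖ := norm_nonneg _
  have n5 : (0:ℝ) ≤ ‖z‖ := norm_nonneg _
  have n6 : (0:ℝ) ≤ ‖Zt z‖ := norm_nonneg _
  have hϑsq : ‖ϑ‖ ^ 2 ≤ CP ^ 2 * ‖Zt z‖ ^ 2 := by nlinarith
  set a := ‖ι (z - ϑ)‖
  set b := ‖ι ϑ‖
  have s1 : ξ * ‖ι z‖ ^ 2 ≤ ξ * (a + b) ^ 2 :=
    mul_le_mul_of_nonneg_left (by nlinarith) hξ.le
  have s2 : ξ * (a + b) ^ 2 ≤ 2 * ξ * a ^ 2 + 2 * ξ * b ^ 2 := by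
    nlinarith [sq_nonneg (a - b)]
  have s3 : 2 * ξ * a ^ 2 ≤ (β / 2) * a ^ 2 := by nlinarith [sq_nonneg a]
  have s4 : (β / 2) * a ^ 2 ≤ ‖z - ϑ‖ ^ 2 / 2 := by linarith [h1]
  have s5 : ‖z - ϑ‖ ^ 2 ≤ 2 * ‖z‖ ^ 2 + 2 * ‖ϑ‖ ^ 2 := by
    have h := mul_self_le_mul_self (norm_nonneg (z - ϑ)) hC
    nlinarith [sq_nonneg (‖z‖ - ‖ϑ‖)]
  have s6 : 2 * ξ * b ^ 2 ≤ 2 * ξ * ‖ϑ‖ ^ 2 :=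
    mul_le_mul_of_nonneg_left (pow_le_pow_left₀ n3 hB 2) (by positivity)
  have s7 : (2 * ξ + 1) * ‖ϑ‖ ^ 2 ≤ (2 * ξ + 1) * (CP ^ 2 * ‖Zt z‖ ^ 2) :=
    mul_le_mul_of_nonneg_left hϑsq (by positivity)
  have s8 : CP ^ 2 * (2 * ξ + 1) * ‖Zt z‖ ^ 2 ≤ lam * ‖Zt z‖ ^ 2 :=
    mul_le_mul_of_nonneg_right hlam (by positivity)
  linarith [s1, s2, s3, s4, s5, s6, s7, s8]
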